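/- For every integer n ≥ 4, the sum over all permutations σ of [n] of (-1) raised to the number of times σ switches from increasing to decreasing or from decreasing to increasing equals 0. Equivalently, the number of permutations of [n] with an even number of such switches equals the number with an odd number. (Hence this statistic exhibits the cyclic sieving phenomenon with respect to fixed-point-free involutions on S_n.) -/

import Mathlib

open Finset

private lemma negpow_aux (a b : ℕ) (h : Odd (a + b)) : (-1 : ℤ) ^ a = -(-1 : ℤ) ^ b := by
  rcases Nat.even_or_odd a with ha | ha
  · have hb : Odd b := by
      rw [Nat.even_iff] at ha; rw [Nat.odd_iff] at h ⊢; omega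
    rw [ha.neg_one_pow, hb.neg_one_pow]; ring
  · have hb : Even b := by
      rw [Nat.odd_iff] at ha h; rw [Nat.even_iff]; omega
    rw [ha.neg_one_pow, hb.neg_one_pow]

private lemma even_ite_aux (p q : Prop) [Decidable p] [Decidable q] (h : p ↔ q) :
    Even ((if p then (1 : ℕ) else 0) + (if q then 1 else 0)) := by
  by_cases hp : p
  · rw [if_pos hp, if_pos (h.mp hp)]; exact ⟨1, rfl⟩
  · rw [if_neg hp, if_neg (fun hq => hp (h.mpr hq))]; exact Even.zero

private lemma four_aux (w x y z : ℕ) (hwx : w ≠ x) (hwy : w ≠ y) (hwz : w ≠ z)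
    (hxy : x ≠ y) (hxz : x ≠ z) (hyz : y ≠ z) :
    Odd ((((if (x < w ∧ y < w) ∨ (w < x ∧ w < y) then 1 else 0) +
          (if (w < x ∧ y < x) ∨ (x < w ∧ x < y) then 1 else 0)) +
         ((if (w < y ∧ z < y) ∨ (y < w ∧ y < z) then 1 else 0) +
          (if (x < y ∧ z < y) ∨ (y < x ∧ y < z) then 1 else 0))) : ℕ) := by
  rw [Nat.odd_iff]
  by_cases h1 : (x < w ∧ y < w) ∨ (w < x ∧ w < y) <;>
    by_cases h2 : (w < x ∧ y < x) ∨ (x < w ∧ x < y) <;>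
      by_cases h3 : (w < y ∧ z < y) ∨ (y < w ∧ y < z) <;>
        by_cases h4 : (x < y ∧ z < y) ∨ (y < x ∧ y < z) <;>
          simp [h1, h2, h3, h4] <;> omega

/-- For `n ≥ 4`, the sum over `S_n` of `(-1)` raised to the number of interior
local extrema (switches between increasing and decreasing) equals `0`. -/
theorem switches_q_eq_neg_one (n : ℕ) (hn : 4 ≤ n) :
    ∑ σ : Equiv.Perm (Fin n),
      (-1 : ℤ) ^ (univ.filter (fun i : Fin n =>
        ∃ a b : Fin n, (a : ℕ) + 1 = (i : ℕ) ∧ (i : ℕ) + 1 = (b : ℕ) ∧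
          ((σ a < σ i ∧ σ b < σ i) ∨ (σ i < σ a ∧ σ i < σ b)))).card
      = 0 := by
  have h0 : (0 : ℕ) < n := by omega
  have h1n : (1 : ℕ) < n := by omega
  have h2n : (2 : ℕ) < n := by omega
  have h3n : (3 : ℕ) < n := by omega
  obtain ⟨p0, hv0⟩ : ∃ p : Fin n, (p : ℕ) = 0 := ⟨⟨0, h0⟩, rfl⟩
  obtain ⟨p1, hv1⟩ : ∃ p : Fin n, (p : ℕ) = 1 := ⟨⟨1, h1n⟩, rfl⟩
  obtain ⟨p2, hv2⟩ : ∃ p : Fin n, (p : ℕ) = 2 := ⟨⟨2, h2n⟩, rfl⟩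
  obtain ⟨p3, hv3⟩ : ∃ p : Fin n, (p : ℕ) = 3 := ⟨⟨3, h3n⟩, rfl⟩
  have hne01 : p0 ≠ p1 := Fin.ne_of_val_ne (by omega)
  have hne02 : p0 ≠ p2 := Fin.ne_of_val_ne (by omega)
  have hne03 : p0 ≠ p3 := Fin.ne_of_val_ne (by omega)
  have hne12 : p1 ≠ p2 := Fin.ne_of_val_ne (by omega)
  have hne13 : p1 ≠ p3 := Fin.ne_of_val_ne (by omega)
  have hne23 : p2 ≠ p3 := Fin.ne_of_val_ne (by omega)
  set τ : Equiv.Perm (Fin n) := Equiv.swap p0 p1 with hτ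
  have hτ0 : τ p0 = p1 := Equiv.swap_apply_left _ _
  have hτ1 : τ p1 = p0 := Equiv.swap_apply_right _ _
  have hτfix : ∀ x : Fin n, 2 ≤ (x : ℕ) → τ x = x := by
    intro x hx
    exact Equiv.swap_apply_of_ne_of_ne (Fin.ne_of_val_ne (by omega))
      (Fin.ne_of_val_ne (by omega))
  have key : ∀ σ : Equiv.Perm (Fin n),
      Odd ((univ.filter (fun i : Fin n =>
          ∃ a b : Fin n, (a : ℕ) + 1 = (i : ℕ) ∧ (i : ℕ) + 1 = (b : ℕ) ∧
            (((σ * τ) a < (σ * τ) i ∧ (σ * τ) b < (σ * τ) i) ∨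
              ((σ * τ) i < (σ * τ) a ∧ (σ * τ) i < (σ * τ) b)))).card +
        (univ.filter (fun i : Fin n =>
          ∃ a b : Fin n, (a : ℕ) + 1 = (i : ℕ) ∧ (i : ℕ) + 1 = (b : ℕ) ∧
            ((σ a < σ i ∧ σ b < σ i) ∨ (σ i < σ a ∧ σ i < σ b)))).card) := by
    intro σ
    have e0 : (σ * τ) p0 = σ p1 := by rw [Equiv.Perm.mul_apply, hτ0]
    have e1 : (σ * τ) p1 = σ p0 := by rw [Equiv.Perm.mul_apply, hτ1]
    have e2 : (σ * τ) p2 = σ p2 := by rw [Equiv.Perm.mul_apply, hτfix p2 (by omega)]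
    have e3 : (σ * τ) p3 = σ p3 := by rw [Equiv.Perm.mul_apply, hτfix p3 (by omega)]
    have A1 : (∃ a b : Fin n, (a : ℕ) + 1 = (p1 : ℕ) ∧ (p1 : ℕ) + 1 = (b : ℕ) ∧
        (((σ * τ) a < (σ * τ) p1 ∧ (σ * τ) b < (σ * τ) p1) ∨
          ((σ * τ) p1 < (σ * τ) a ∧ (σ * τ) p1 < (σ * τ) b)))
        ↔ ((σ p1 < σ p0 ∧ σ p2 < σ p0) ∨ (σ p0 < σ p1 ∧ σ p0 < σ p2)) := by
      constructor
      · rintro ⟨a, b, ha, hb, h⟩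
        obtain rfl : a = p0 := Fin.ext (by omega)
        obtain rfl : b = p2 := Fin.ext (by omega)
        rw [e0, e1, e2] at h
        exact h
      · intro h
        exact ⟨p0, p2, by omega, by omega, by rw [e0, e1, e2]; exact h⟩
    have B1 : (∃ a b : Fin n, (a : ℕ) + 1 = (p1 : ℕ) ∧ (p1 : ℕ) + 1 = (b : ℕ) ∧
        ((σ a < σ p1 ∧ σ b < σ p1) ∨ (σ p1 < σ a ∧ σ p1 < σ b)))
        ↔ ((σ p0 < σ p1 ∧ σ p2 < σ p1) ∨ (σ p1 < σ p0 ∧ σ p1 < σ p2)) := by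
      constructor
      · rintro ⟨a, b, ha, hb, h⟩
        obtain rfl : a = p0 := Fin.ext (by omega)
        obtain rfl : b = p2 := Fin.ext (by omega)
        exact h
      · intro h
        exact ⟨p0, p2, by omega, by omega, h⟩
    have A2 : (∃ a b : Fin n, (a : ℕ) + 1 = (p2 : ℕ) ∧ (p2 : ℕ) + 1 = (b : ℕ) ∧
        (((σ * τ) a < (σ * τ) p2 ∧ (σ * τ) b < (σ * τ) p2) ∨
          ((σ * τ) p2 < (σ * τ) a ∧ (σ * τ) p2 < (σ * τ) b)))
        ↔ ((σ p0 < σ p2 ∧ σ p3 < σ p2) ∨ (σ p2 < σ p0 ∧ σ p2 < σ p3)) := by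
      constructor
      · rintro ⟨a, b, ha, hb, h⟩
        obtain rfl : a = p1 := Fin.ext (by omega)
        obtain rfl : b = p3 := Fin.ext (by omega)
        rw [e1, e2, e3] at h
        exact h
      · intro h
        exact ⟨p1, p3, by omega, by omega, by rw [e1, e2, e3]; exact h⟩
    have B2 : (∃ a b : Fin n, (a : ℕ) + 1 = (p2 : ℕ) ∧ (p2 : ℕ) + 1 = (b : ℕ) ∧
        ((σ a < σ p2 ∧ σ b < σ p2) ∨ (σ p2 < σ a ∧ σ p2 < σ b)))
        ↔ ((σ p1 < σ p2 ∧ σ p3 < σ p2) ∨ (σ p2 < σ p1 ∧ σ p2 < σ p3)) := by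
      constructor
      · rintro ⟨a, b, ha, hb, h⟩
        obtain rfl : a = p1 := Fin.ext (by omega)
        obtain rfl : b = p3 := Fin.ext (by omega)
        exact h
      · intro h
        exact ⟨p1, p3, by omega, by omega, h⟩
    rw [Finset.card_filter, Finset.card_filter, ← Finset.sum_add_distrib,
      ← Finset.sum_sdiff (Finset.subset_univ ({p1, p2} : Finset (Fin n)))]
    apply Even.add_odd
    · refine Finset.sum_induction _ _ (fun a b ha hb => ha.add hb) Even.zero ?_
      intro i hi
      have hi' : i ≠ p1 ∧ i ≠ p2 := by
        simp only [Finset.mem_sdiff, Finset.mem_univ, Finset.mem_insert,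
          Finset.mem_singleton, true_and] at hi
        exact ⟨fun h => hi (Or.inl h), fun h => hi (Or.inr h)⟩
      have hiv1 : (i : ℕ) ≠ 1 := fun h => hi'.1 (Fin.ext (by omega))
      have hiv2 : (i : ℕ) ≠ 2 := fun h => hi'.2 (Fin.ext (by omega))
      refine even_ite_aux _ _ ?_
      constructor
      · rintro ⟨a, b, ha, hb, h⟩
        have haa : (σ * τ) a = σ a := by
          rw [Equiv.Perm.mul_apply, hτfix a (by omega)]
        have hii : (σ * τ) i = σ i := by
          rw [Equiv.Perm.mul_apply, hτfix i (by omega)]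
        have hbb : (σ * τ) b = σ b := by
          rw [Equiv.Perm.mul_apply, hτfix b (by omega)]
        exact ⟨a, b, ha, hb, by rw [haa, hii, hbb] at h; exact h⟩
      · rintro ⟨a, b, ha, hb, h⟩
        have haa : (σ * τ) a = σ a := by
          rw [Equiv.Perm.mul_apply, hτfix a (by omega)]
        have hii : (σ * τ) i = σ i := by
          rw [Equiv.Perm.mul_apply, hτfix i (by omega)]
        have hbb : (σ * τ) b = σ b := by
          rw [Equiv.Perm.mul_apply, hτfix b (by omega)]
        exact ⟨a, b, ha, hb, by rw [haa, hii, hbb]; exact h⟩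
    · rw [Finset.sum_pair hne12]
      simp only [A1, B1, A2, B2]
      simp only [Fin.lt_def]
      have hd : ∀ u v : Fin n, u ≠ v → ((σ u : ℕ) ≠ (σ v : ℕ)) :=
        fun u v huv h => huv (σ.injective (Fin.ext h))
      exact four_aux ((σ p0 : ℕ)) ((σ p1 : ℕ)) ((σ p2 : ℕ)) ((σ p3 : ℕ))
        (hd p0 p1 hne01) (hd p0 p2 hne02) (hd p0 p3 hne03)
        (hd p1 p2 hne12) (hd p1 p3 hne13) (hd p2 p3 hne23)
  set F : Equiv.Perm (Fin n) → ℤ := fun σ =>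
    (-1 : ℤ) ^ (univ.filter (fun i : Fin n =>
      ∃ a b : Fin n, (a : ℕ) + 1 = (i : ℕ) ∧ (i : ℕ) + 1 = (b : ℕ) ∧
        ((σ a < σ i ∧ σ b < σ i) ∨ (σ i < σ a ∧ σ i < σ b)))).card with hF
  show ∑ σ : Equiv.Perm (Fin n), F σ = 0
  have hstep : ∀ σ : Equiv.Perm (Fin n), F (σ * τ) = - F σ := by
    intro σ
    simp only [hF]
    exact negpow_aux _ _ (key σ)
  have h1 : ∑ σ : Equiv.Perm (Fin n), F (σ * τ) = ∑ σ : Equiv.Perm (Fin n), F σ :=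
    Fintype.sum_equiv (Equiv.mulRight τ) _ _ (fun σ => rfl)
  have h2 : ∑ σ : Equiv.Perm (Fin n), F (σ * τ) = -∑ σ : Equiv.Perm (Fin n), F σ := by
    simp only [hstep]
    exact Finset.sum_neg_distrib _
  have := h1.symm.trans h2
  linarith
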